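/- Fix a natural number P ≥ 1 and positive reals T, n. For all positive reals L₁,...,L_P, max(L₁, L₂/(n√L₁), L₃/(n√L₂), ..., L_P/(n√L_{P-1}), T/(n√L_P)) ≥ n^{(2-2^{P+1})/(2^{P+1}-1)} · T^{2^P/(2^{P+1}-1)}. -/

import Mathlib

/-- General `P`-pass balancing: the maximum of `L₁`, the terms
`L_{p+1}/(n √(L_p))` for `p = 1, …, P-1`, and `T/(n √(L_P))` is at least
`n^{(2-2^{P+1})/(2^{P+1}-1)} · T^{2^P/(2^{P+1}-1)}`. -/
theorem stmt_13 (P : ℕ) (hP : 1 ≤ P) (n T : ℝ) (hn : 0 < n) (hT : 0 < T)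
    (L : ℕ → ℝ) (hL : ∀ p, 1 ≤ p → p ≤ P → 0 < L p) :
    n ^ ((2 - (2 : ℝ) ^ (P + 1)) / ((2 : ℝ) ^ (P + 1) - 1)) *
        T ^ ((2 : ℝ) ^ P / ((2 : ℝ) ^ (P + 1) - 1)) ≤
      max ((Finset.range P).sup' (Finset.nonempty_range_iff.mpr (by omega))
          (fun p => if p = 0 then L 1 else L (p + 1) / (n * Real.sqrt (L p))))
        (T / (n * Real.sqrt (L P))) := by
  set f : ℕ → ℝ := fun p => if p = 0 then L 1 else L (p + 1) / (n * Real.sqrt (L p)) with hf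
  set M := max ((Finset.range P).sup' (Finset.nonempty_range_iff.mpr (by omega)) f)
    (T / (n * Real.sqrt (L P))) with hMdef
  have h0mem : 0 ∈ Finset.range P := Finset.mem_range.mpr (by omega)
  have hL1M : L 1 ≤ M := by
    have h := Finset.le_sup' f h0mem
    simp only [hf, if_pos rfl] at h
    exact h.trans (le_max_left _ _)
  have hM0 : 0 < M := lt_of_lt_of_le (hL 1 le_rfl hP) hL1M
  have key : ∀ p, 1 ≤ p → p ≤ P →
      L p ≤ n ^ ((2:ℝ) - 4 / 2 ^ p) * M ^ ((2:ℝ) - 2 / 2 ^ p) := by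
    intro p
    induction p with
    | zero => omega
    | succ q ih =>
      intro _ h2
      rcases Nat.eq_zero_or_pos q with hq0 | hq
      · subst hq0
        simpa using hL1M.trans_eq (by norm_num)
      · have hqP : q ≤ P := by omega
        have hqmem : q ∈ Finset.range P := Finset.mem_range.mpr (by omega)
        have hterm : L (q + 1) / (n * Real.sqrt (L q)) ≤ M := by
          have h := Finset.le_sup' f hqmem
          simp only [hf, if_neg (Nat.pos_iff_ne_zero.mp hq)] at h
          exact h.trans (le_max_left _ _)
        have hLq : 0 < L q := hL q hq hqP
        have hden : 0 < n * Real.sqrt (L q) := by positivity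
        have h1 : L (q + 1) ≤ M * (n * Real.sqrt (L q)) := (div_le_iff₀ hden).mp hterm
        have hsq : Real.sqrt (L q) ≤
            n ^ (((2:ℝ) - 4 / 2 ^ q) * (1/2)) * M ^ (((2:ℝ) - 2 / 2 ^ q) * (1/2)) := by
          rw [Real.sqrt_eq_rpow]
          calc (L q) ^ ((1:ℝ)/2)
              ≤ (n ^ ((2:ℝ) - 4 / 2 ^ q) * M ^ ((2:ℝ) - 2 / 2 ^ q)) ^ ((1:ℝ)/2) :=
                Real.rpow_le_rpow hLq.le (ih hq hqP) (by norm_num)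
            _ = _ := by
                rw [Real.mul_rpow (by positivity) (by positivity),
                  ← Real.rpow_mul hn.le, ← Real.rpow_mul hM0.le]
        have h2pow : (0:ℝ) < 2 ^ q := by positivity
        calc L (q + 1) ≤ M * (n * Real.sqrt (L q)) := h1
          _ ≤ M * (n * (n ^ (((2:ℝ) - 4 / 2 ^ q) * (1/2)) *
                M ^ (((2:ℝ) - 2 / 2 ^ q) * (1/2)))) := by
              gcongr
          _ = n ^ ((2:ℝ) - 4 / 2 ^ (q + 1)) * M ^ ((2:ℝ) - 2 / 2 ^ (q + 1)) := by
              have e1 : ((2:ℝ) - 4 / 2 ^ (q + 1)) = 1 + ((2:ℝ) - 4 / 2 ^ q) * (1/2) := by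
                rw [pow_succ]; field_simp; ring
              have e2 : ((2:ℝ) - 2 / 2 ^ (q + 1)) = 1 + ((2:ℝ) - 2 / 2 ^ q) * (1/2) := by
                rw [pow_succ]; field_simp; ring
              rw [e1, e2, Real.rpow_add hn, Real.rpow_add hM0, Real.rpow_one,
                Real.rpow_one]
              ring
  -- final step
  have hLP : 0 < L P := hL P hP le_rfl
  have hdenP : 0 < n * Real.sqrt (L P) := by positivity
  have htermT : T / (n * Real.sqrt (L P)) ≤ M := le_max_right _ _
  have hT1 : T ≤ M * (n * Real.sqrt (L P)) := (div_le_iff₀ hdenP).mp htermT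
  have hsqP : Real.sqrt (L P) ≤
      n ^ (((2:ℝ) - 4 / 2 ^ P) * (1/2)) * M ^ (((2:ℝ) - 2 / 2 ^ P) * (1/2)) := by
    rw [Real.sqrt_eq_rpow]
    calc (L P) ^ ((1:ℝ)/2)
        ≤ (n ^ ((2:ℝ) - 4 / 2 ^ P) * M ^ ((2:ℝ) - 2 / 2 ^ P)) ^ ((1:ℝ)/2) :=
          Real.rpow_le_rpow hLP.le (key P hP le_rfl) (by norm_num)
      _ = _ := by
          rw [Real.mul_rpow (by positivity) (by positivity),
            ← Real.rpow_mul hn.le, ← Real.rpow_mul hM0.le]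
  have h2P : (0:ℝ) < 2 ^ P := by positivity
  have hQ1 : (1:ℝ) < 2 ^ (P + 1) := one_lt_pow₀ one_lt_two (by omega)
  have hQne : ((2:ℝ) ^ (P + 1) - 1) ≠ 0 := by linarith
  have hT2 : T ≤ n ^ ((2:ℝ) - 2 / 2 ^ P) * M ^ ((2:ℝ) - 1 / 2 ^ P) := by
    calc T ≤ M * (n * Real.sqrt (L P)) := hT1
      _ ≤ M * (n * (n ^ (((2:ℝ) - 4 / 2 ^ P) * (1/2)) *
            M ^ (((2:ℝ) - 2 / 2 ^ P) * (1/2)))) := by gcongr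
      _ = n ^ ((2:ℝ) - 2 / 2 ^ P) * M ^ ((2:ℝ) - 1 / 2 ^ P) := by
          have e1 : ((2:ℝ) - 2 / 2 ^ P) = 1 + ((2:ℝ) - 4 / 2 ^ P) * (1/2) := by
            field_simp; ring
          have e2 : ((2:ℝ) - 1 / 2 ^ P) = 1 + ((2:ℝ) - 2 / 2 ^ P) * (1/2) := by
            field_simp; ring
          rw [e1, e2, Real.rpow_add hn, Real.rpow_add hM0, Real.rpow_one,
            Real.rpow_one]
          ring
  set s : ℝ := (2:ℝ) ^ P / ((2:ℝ) ^ (P + 1) - 1) with hs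
  have hs0 : 0 < s := by
    apply div_pos h2P; linarith
  have hfin : T ^ s ≤ n ^ (((2:ℝ) ^ (P + 1) - 2) / ((2:ℝ) ^ (P + 1) - 1)) * M := by
    calc T ^ s ≤ (n ^ ((2:ℝ) - 2 / 2 ^ P) * M ^ ((2:ℝ) - 1 / 2 ^ P)) ^ s :=
          Real.rpow_le_rpow hT.le hT2 hs0.le
      _ = n ^ (((2:ℝ) - 2 / 2 ^ P) * s) * M ^ (((2:ℝ) - 1 / 2 ^ P) * s) := by
          rw [Real.mul_rpow (by positivity) (by positivity),
            ← Real.rpow_mul hn.le, ← Real.rpow_mul hM0.le]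
      _ = n ^ (((2:ℝ) ^ (P + 1) - 2) / ((2:ℝ) ^ (P + 1) - 1)) * M := by
          have eA : ((2:ℝ) - 2 / 2 ^ P) * s
              = ((2:ℝ) ^ (P + 1) - 2) / ((2:ℝ) ^ (P + 1) - 1) := by
            rw [hs, pow_succ]; field_simp
          have eB : ((2:ℝ) - 1 / 2 ^ P) * s = 1 := by
            have hnum : ((2:ℝ) - 1 / 2 ^ P) * 2 ^ P = (2:ℝ) ^ (P + 1) - 1 := by
              rw [pow_succ]; field_simp
            rw [hs, ← mul_div_assoc, hnum, div_self hQne]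
          rw [eA, eB, Real.rpow_one]
  have hnpos : (0:ℝ) < n ^ ((2 - (2:ℝ) ^ (P + 1)) / ((2:ℝ) ^ (P + 1) - 1)) := by
    positivity
  calc n ^ ((2 - (2:ℝ) ^ (P + 1)) / ((2:ℝ) ^ (P + 1) - 1)) * T ^ s
      ≤ n ^ ((2 - (2:ℝ) ^ (P + 1)) / ((2:ℝ) ^ (P + 1) - 1)) *
        (n ^ (((2:ℝ) ^ (P + 1) - 2) / ((2:ℝ) ^ (P + 1) - 1)) * M) := by
        exact mul_le_mul_of_nonneg_left hfin hnpos.le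
    _ = M := by
        rw [← mul_assoc, ← Real.rpow_add hn]
        have : (2 - (2:ℝ) ^ (P + 1)) / ((2:ℝ) ^ (P + 1) - 1) +
            ((2:ℝ) ^ (P + 1) - 2) / ((2:ℝ) ^ (P + 1) - 1) = 0 := by
          field_simp
          ring
        rw [this, Real.rpow_zero, one_mul]
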